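/- arXiv:2501.12480 — 2 statements merged into one kernel-verified Lean document; each statement's English description precedes it below -/
import Mathlib

section
/- (Theorem 3(ii): exact asymptotics, two-point case with a = 0) Let a = 0 < b, z ∈ (f(q), 1), and t_+ := z^{p/(p−1)} ∈ (0,1) (then t_+ > q). With α_n := ⌈n·t_+⌉/n one has, as n → ∞: P(A_n(z)) = (1−q)^n + (1 + o(1)) · Q_n(α_n). -/
open MeasureTheory ProbabilityTheory Real Set Filter
open scoped ENNReal Classical

/-- The function `f(t) = (a + t(b−a)) / (|a|^p + t(b^p − |a|^p))^{1/p}`. -/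
noncomputable def crossFn (p a b t : ℝ) : ℝ :=
  (a + t * (b - a)) / (|a| ^ p + t * (b ^ p - |a| ^ p)) ^ (1 / p)

/-- The upper-tail exact binomial large-deviation asymptotics factor
`Q_n(α) = √(α/(2πn(1−α))) · ((1−q)/(α−q)) · (q/α)^{nα} · ((1−q)/(1−α))^{n(1−α)}`. -/
noncomputable def binomQ (q : ℝ) (n : ℕ) (α : ℝ) : ℝ :=
  Real.sqrt (α / (2 * Real.pi * n * (1 - α))) * ((1 - q) / (α - q)) *
    (q / α) ^ ((n : ℝ) * α) * ((1 - q) / (1 - α)) ^ ((n : ℝ) * (1 - α))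

lemma stirling_ident {k m : ℕ} (hk : 1 ≤ k) (hm : 1 ≤ m) :
    ((k+m).choose k : ℝ) * ((k:ℝ)/((k:ℝ)+m))^k * ((m:ℝ)/((k:ℝ)+m))^m
      * Real.sqrt (2*π*k*m/((k:ℝ)+m))
    = Real.sqrt π * Stirling.stirlingSeq (k+m)
        / (Stirling.stirlingSeq k * Stirling.stirlingSeq m) := by
  have hk0 : (0:ℝ) < k := by exact_mod_cast hk
  have hm0 : (0:ℝ) < m := by exact_mod_cast hm
  have hn0 : (0:ℝ) < (k:ℝ) + m := by linarith
  have hchoose : ((k+m).choose k : ℝ) = ((k+m).factorial : ℝ) / (k.factorial * m.factorial) := by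
    rw [Nat.cast_choose ℝ (Nat.le_add_right k m)]
    simp [Nat.add_sub_cancel_left]
  have hexp : (0:ℝ) < Real.exp 1 := Real.exp_pos 1
  have hfk : (0:ℝ) < k.factorial := by exact_mod_cast k.factorial_pos
  have hfm : (0:ℝ) < m.factorial := by exact_mod_cast m.factorial_pos
  have hfn : (0:ℝ) < (k+m).factorial := by exact_mod_cast (k+m).factorial_pos
  have s2 : Real.sqrt 2 > 0 := by positivity
  have sk : Real.sqrt k > 0 := Real.sqrt_pos.2 hk0
  have sm : Real.sqrt m > 0 := Real.sqrt_pos.2 hm0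
  have sn : Real.sqrt ((k:ℝ)+m) > 0 := Real.sqrt_pos.2 hn0
  have spi : Real.sqrt π > 0 := Real.sqrt_pos.2 Real.pi_pos
  unfold Stirling.stirlingSeq
  rw [hchoose]
  have e1 : Real.sqrt (2*((k:ℝ)+m)) = Real.sqrt 2 * Real.sqrt ((k:ℝ)+m) := Real.sqrt_mul (by norm_num) _
  have e2 : Real.sqrt (2*(k:ℝ)) = Real.sqrt 2 * Real.sqrt k := Real.sqrt_mul (by norm_num) _
  have e3 : Real.sqrt (2*(m:ℝ)) = Real.sqrt 2 * Real.sqrt m := Real.sqrt_mul (by norm_num) _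
  have e4 : Real.sqrt (2*π*k*m/((k:ℝ)+m))
      = Real.sqrt 2 * Real.sqrt π * Real.sqrt k * Real.sqrt m / Real.sqrt ((k:ℝ)+m) := by
    rw [Real.sqrt_div (by positivity), Real.sqrt_mul (by positivity), Real.sqrt_mul (by positivity),
      Real.sqrt_mul (by positivity)]
  have e5 : ((k:ℝ)+m)^(k+m) = ((k:ℝ)+m)^k * ((k:ℝ)+m)^m := pow_add _ _ _
  have e6 : Real.exp 1 ^(k+m) = Real.exp 1 ^k * Real.exp 1 ^m := pow_add _ _ _
  have hcast : ((k+m:ℕ):ℝ) = (k:ℝ) + m := by push_cast; ring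
  rw [hcast, e1, e2, e3, e4, div_pow, div_pow, div_pow, e5, e6]
  have hnk : ((k:ℝ)+m)^k ≠ 0 := by positivity
  have hnm : ((k:ℝ)+m)^m ≠ 0 := by positivity
  field_simp
  ring_nf
  rw [inv_pow, inv_pow]
  field_simp


set_option maxHeartbeats 1000000 in
theorem binom_tail_asymp {q t : ℝ} (hq0 : 0 < q) (hqt : q < t) (ht1 : t < 1) :
    Tendsto (fun n : ℕ =>
      (∑ j ∈ Finset.Icc (⌈(n:ℝ)*t⌉₊) n, ((n.choose j : ℝ) * q^j * (1-q)^(n-j)))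
        / binomQ q n ((⌈(n:ℝ)*t⌉₊ : ℝ)/n)) atTop (nhds 1) := by
  have ht0 : 0 < t := hq0.trans hqt
  have hq1 : q < 1 := hqt.trans ht1
  set k : ℕ → ℕ := fun n => ⌈(n:ℝ)*t⌉₊ with hk
  -- basic facts about k
  have hkle : ∀ n, k n ≤ n := by
    intro n
    exact Nat.ceil_le.mpr (by nlinarith [Nat.cast_nonneg (α := ℝ) n])
  have hknt : ∀ n : ℕ, (n:ℝ)*t ≤ k n := fun n => Nat.le_ceil _
  have hkup : ∀ n, (k n : ℝ) < (n:ℝ)*t + 1 := by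
    intro n
    exact Nat.ceil_lt_add_one (by positivity)
  have hα : Tendsto (fun n : ℕ => (k n : ℝ)/n) atTop (nhds t) := by
    have h1 : Tendsto (fun n : ℕ => t + 1/(n:ℝ)) atTop (nhds (t + 0)) :=
      tendsto_const_nhds.add tendsto_one_div_atTop_nhds_zero_nat
    rw [add_zero] at h1
    refine tendsto_of_tendsto_of_tendsto_of_le_of_le' tendsto_const_nhds h1 ?_ ?_
    · filter_upwards [eventually_ge_atTop 1] with n hn
      have hn0 : (0:ℝ) < n := by exact_mod_cast hn
      rw [le_div_iff₀ hn0]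
      nlinarith [hknt n]
    · filter_upwards [eventually_ge_atTop 1] with n hn
      have hn0 : (0:ℝ) < n := by exact_mod_cast hn
      rw [div_le_iff₀ hn0]
      have h2 : (t + 1/(n:ℝ)) * n = t*n + 1 := by field_simp
      have := hkup n
      nlinarith
  have hktop : Tendsto k atTop atTop := by
    refine tendsto_atTop.mpr fun C => ?_
    filter_upwards [eventually_ge_atTop (⌈(C:ℝ)/t⌉₊ + 1)] with n hn
    have h2 : ((C:ℝ)/t) ≤ n := by
      calc ((C:ℝ)/t) ≤ ⌈(C:ℝ)/t⌉₊ := Nat.le_ceil _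
      _ ≤ n := by exact_mod_cast le_of_lt (Nat.lt_of_lt_of_le (Nat.lt_succ_self _) hn)
    have : (C:ℝ) ≤ (n:ℝ)*t := by
      rw [div_le_iff₀ ht0] at h2; linarith
    exact_mod_cast this.trans (hknt n)
  have hmtop : Tendsto (fun n => n - k n) atTop atTop := by
    refine tendsto_atTop.mpr fun C => ?_
    have h1 : Tendsto (fun n : ℕ => (n:ℝ)*(1-t) - 1) atTop atTop := by
      apply tendsto_atTop_add_const_right
      exact Tendsto.atTop_mul_const (by linarith) tendsto_natCast_atTop_atTop
    filter_upwards [h1.eventually_ge_atTop (C:ℝ)] with n hn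
    have h3 : (C:ℝ) ≤ ((n - k n : ℕ) : ℝ) := by
      rw [Nat.cast_sub (hkle n)]
      have := hkup n
      nlinarith
    exact_mod_cast h3
  have hklt : ∀ᶠ n in atTop, k n < n := by
    filter_upwards [hmtop.eventually_ge_atTop 1] with n hn
    omega
  have hk1 : ∀ᶠ n in atTop, 1 ≤ k n := hktop.eventually_ge_atTop 1
  set ρ : ℝ := q*(1-t)/((1-q)*t) with hρdef
  have hden : (0:ℝ) < (1-q)*t := by nlinarith
  have hρ0 : 0 ≤ ρ := by
    apply div_nonneg (by nlinarith) (le_of_lt hden)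
  have hρ1 : ρ < 1 := by
    rw [hρdef, div_lt_one hden]; nlinarith
  set ρ' : ℝ := (1+ρ)/2 with hρ'def
  have hρ'0 : 0 ≤ ρ' := by positivity
  have hρ'1 : ρ' < 1 := by rw [hρ'def]; linarith
  have hρρ' : ρ < ρ' := by rw [hρ'def]; linarith
  set bb : ℕ → ℕ → ℝ := fun n j => (n.choose j : ℝ) * q^j * (1-q)^(n-j) with hbb
  set g : ℕ → ℕ → ℝ := fun n i => if k n + i ≤ n then
      ∏ j ∈ Finset.range i, (q * ((n:ℝ) - ((k n : ℝ) + j)) / ((1-q) * ((k n:ℝ) + j + 1)))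
    else 0 with hg
  have hq1ne : (1:ℝ) - q ≠ 0 := by linarith
  -- recursion for the binomial weights
  have hrec : ∀ n i : ℕ, k n + i ≤ n →
      bb n (k n + i) = bb n (k n) *
        ∏ j ∈ Finset.range i, (q * ((n:ℝ) - ((k n : ℝ) + j)) / ((1-q) * ((k n:ℝ) + j + 1))) := by
    intro n i
    induction i with
    | zero => simp
    | succ i ih =>
      intro hle
      have hle' : k n + i ≤ n := by omega
      rw [Finset.prod_range_succ, ← mul_assoc, ← ih hle']
      have hm : k n + i < n := by omega
      have hchoose : ((n.choose (k n + i + 1)) : ℝ) * ((k n : ℝ) + i + 1)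
          = (n.choose (k n + i) : ℝ) * ((n:ℝ) - ((k n : ℝ) + i)) := by
        have h1 := Nat.choose_succ_right_eq n (k n + i)
        have h2 : ((n.choose (k n + i + 1) * (k n + i + 1) : ℕ) : ℝ)
            = ((n.choose (k n + i) * (n - (k n + i)) : ℕ) : ℝ) := by exact_mod_cast h1
        push_cast [Nat.cast_sub (le_of_lt hm)] at h2
        linarith
      have key : bb n (k n + i + 1) * ((1-q)*((k n:ℝ) + i + 1))
          = bb n (k n + i) * (q * ((n:ℝ) - ((k n : ℝ) + i))) := by
        simp only [hbb]
        have hpow : (1-q)^(n - (k n + i)) = (1-q)^(n-(k n + i + 1)) * (1-q) := by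
          rw [← pow_succ]; congr 1; omega
        rw [hpow, pow_succ q (k n + i)]
        linear_combination (q^(k n + i) * q * (1-q)^(n-(k n + i + 1)) * (1-q)) * hchoose
      have hne : (1-q)*((k n:ℝ) + i + 1) ≠ 0 := by positivity
      rw [show k n + (i+1) = k n + i + 1 from rfl, mul_div_assoc', eq_div_iff hne]
      linarith [key]
  -- tail sum as geometric-type series
  have hSfun : ∀ n, (∑ j ∈ Finset.Icc (k n) n, bb n j) = bb n (k n) * ∑' i, g n i := by
    intro n
    have h1 : ∑' i, g n i = ∑ i ∈ Finset.range (n + 1 - k n), g n i := by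
      apply tsum_eq_sum
      intro i hi
      simp only [Finset.mem_range, not_lt] at hi
      simp only [hg]
      rw [if_neg (by omega)]
    rw [h1, Finset.mul_sum]
    rw [show Finset.Icc (k n) n = Finset.map ⟨fun i => k n + i, add_right_injective (k n)⟩
        (Finset.range (n + 1 - k n)) from ?_]
    · rw [Finset.sum_map]
      apply Finset.sum_congr rfl
      intro i hi
      simp only [Finset.mem_range] at hi
      have hle : k n + i ≤ n := by omega
      simp only [Function.Embedding.coeFn_mk, hg]
      rw [if_pos hle, hrec n i hle]
    · ext j
      simp only [Finset.mem_Icc, Finset.mem_map, Finset.mem_range, Function.Embedding.coeFn_mk]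
      constructor
      · rintro ⟨h1', h2'⟩; exact ⟨j - k n, by omega, by omega⟩
      · rintro ⟨i, hi, rfl⟩; omega
  -- each factor tends to ρ
  have hfac : ∀ j : ℕ, Tendsto
      (fun n : ℕ => q * ((n:ℝ) - ((k n : ℝ) + j)) / ((1-q) * ((k n:ℝ) + j + 1))) atTop (nhds ρ) := by
    intro j
    have heq : ∀ᶠ n : ℕ in atTop, q * ((n:ℝ) - ((k n : ℝ) + j)) / ((1-q) * ((k n:ℝ) + j + 1))
        = q * (1 - ((k n:ℝ)/n) - (j:ℝ)*(1/n)) / ((1-q) * ((k n:ℝ)/n + ((j:ℝ)+1)*(1/n))) := by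
      filter_upwards [eventually_ge_atTop 1] with n hn
      have hn0 : (n:ℝ) ≠ 0 := by positivity
      rw [div_eq_div_iff]
      · field_simp
        ring
      · have : (0:ℝ) < (k n:ℝ) + j + 1 := by positivity
        nlinarith
      · have h1 : (0:ℝ) < (k n:ℝ)/n + ((j:ℝ)+1)*(1/n) := by positivity
        nlinarith
    rw [tendsto_congr' heq]
    have h0 : Tendsto (fun n : ℕ => 1/(n:ℝ)) atTop (nhds 0) := tendsto_one_div_atTop_nhds_zero_nat
    have hnum : Tendsto (fun n : ℕ => q * (1 - ((k n:ℝ)/n) - (j:ℝ)*(1/n))) atTop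
        (nhds (q * (1 - t - (j:ℝ)*0))) :=
      tendsto_const_nhds.mul ((tendsto_const_nhds.sub hα).sub (tendsto_const_nhds.mul h0))
    have hden' : Tendsto (fun n : ℕ => (1-q) * ((k n:ℝ)/n + ((j:ℝ)+1)*(1/n))) atTop
        (nhds ((1-q) * (t + ((j:ℝ)+1)*0))) :=
      tendsto_const_nhds.mul (hα.add (tendsto_const_nhds.mul h0))
    have hne : ((1-q) * (t + ((j:ℝ)+1)*0)) ≠ 0 := by
      have he : (1-q) * (t + ((j:ℝ)+1)*0) = (1-q)*t := by ring
      rw [he]; exact ne_of_gt hden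
    have := hnum.div hden' hne
    have he2 : q * (1 - t - (j:ℝ)*0) / ((1-q) * (t + ((j:ℝ)+1)*0)) = ρ := by
      rw [hρdef]; ring_nf
    rw [he2] at this
    exact this
  -- each g n i tends to ρ^i
  have hgi : ∀ i : ℕ, Tendsto (fun n : ℕ => g n i) atTop (nhds (ρ^i)) := by
    intro i
    have heq : ∀ᶠ n : ℕ in atTop, g n i
        = ∏ j ∈ Finset.range i, (q * ((n:ℝ) - ((k n : ℝ) + j)) / ((1-q) * ((k n:ℝ) + j + 1))) := by
      filter_upwards [hmtop.eventually_ge_atTop i] with n hn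
      simp only [hg]
      have := hkle n
      rw [if_pos (by omega)]
    rw [tendsto_congr' heq, show (ρ^i) = ∏ j ∈ Finset.range i, ρ by
      rw [Finset.prod_const, Finset.card_range]]
    exact tendsto_finset_prod _ (fun j _ => hfac j)
  -- uniform geometric bound
  have hbound : ∀ᶠ n in atTop, ∀ i : ℕ, ‖g n i‖ ≤ ρ'^i := by
    filter_upwards [(hfac 0).eventually_lt_const hρρ'] with n h0n i
    have h0n' : q * ((n:ℝ) - ((k n : ℝ) + 0)) / ((1-q) * ((k n:ℝ) + 0 + 1)) ≤ ρ' := by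
      exact_mod_cast h0n.le
    simp only [hg]
    split_ifs with h
    · have hc1 : (0:ℝ) ≤ (k n:ℝ) := Nat.cast_nonneg _
      have hkn0 : (k n:ℝ) ≤ n := by exact_mod_cast hkle n
      have hnonneg : ∀ j ∈ Finset.range i,
          0 ≤ q * ((n:ℝ) - ((k n : ℝ) + j)) / ((1-q) * ((k n:ℝ) + j + 1)) := by
        intro j hj
        simp only [Finset.mem_range] at hj
        have hc2 : (0:ℝ) ≤ (j:ℝ) := Nat.cast_nonneg _
        have h1 : (k n : ℝ) + j ≤ n := by
          have : k n + j ≤ n := by omega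
          exact_mod_cast this
        apply div_nonneg (by nlinarith) (by nlinarith)
      have hle : ∀ j ∈ Finset.range i,
          q * ((n:ℝ) - ((k n : ℝ) + j)) / ((1-q) * ((k n:ℝ) + j + 1)) ≤ ρ' := by
        intro j hj
        simp only [Finset.mem_range] at hj
        have hc2 : (0:ℝ) ≤ (j:ℝ) := Nat.cast_nonneg _
        have h1 : (k n : ℝ) + j ≤ n := by
          have : k n + j ≤ n := by omega
          exact_mod_cast this
        have step : q * ((n:ℝ) - ((k n : ℝ) + j)) / ((1-q) * ((k n:ℝ) + j + 1))
            ≤ q * ((n:ℝ) - ((k n : ℝ) + 0)) / ((1-q) * ((k n:ℝ) + 0 + 1)) :=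
          div_le_div₀ (by nlinarith) (by nlinarith) (by nlinarith) (by nlinarith)
        exact step.trans h0n'
      rw [Real.norm_of_nonneg (Finset.prod_nonneg hnonneg)]
      calc ∏ j ∈ Finset.range i, q * ((n:ℝ) - ((k n : ℝ) + j)) / ((1-q) * ((k n:ℝ) + j + 1))
          ≤ ∏ _j ∈ Finset.range i, ρ' := Finset.prod_le_prod hnonneg hle
        _ = ρ'^i := by rw [Finset.prod_const, Finset.card_range]
    · rw [norm_zero]
      exact pow_nonneg hρ'0 i
  have htsum : Tendsto (fun n : ℕ => ∑' i, g n i) atTop (nhds (1-ρ)⁻¹) := by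
    have hsum : Summable (fun i : ℕ => ρ'^i) := summable_geometric_of_lt_one hρ'0 hρ'1
    have h2 := tendsto_tsum_of_dominated_convergence hsum hgi hbound
    rwa [tsum_geometric_of_lt_one hρ0 hρ1] at h2
  -- Stirling part
  have hspi := Stirling.tendsto_stirlingSeq_sqrt_pi
  set Dn : ℕ → ℝ := fun n => (n.choose (k n):ℝ) * ((k n:ℝ)/n)^(k n) * (((n - k n:ℕ):ℝ)/n)^(n - k n)
      * Real.sqrt (2*π*(k n)*((n - k n:ℕ):ℝ)/n) with hDn
  have hDid : ∀ᶠ n in atTop, Dn n = Real.sqrt π * Stirling.stirlingSeq n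
      / (Stirling.stirlingSeq (k n) * Stirling.stirlingSeq (n - k n)) := by
    filter_upwards [hk1, hklt] with n h1 h2
    have hM : 1 ≤ n - k n := by omega
    have hid := stirling_ident (k := k n) (m := n - k n) h1 hM
    have hKM : k n + (n - k n) = n := by omega
    have hcast : ((k n:ℝ) + ((n - k n:ℕ):ℝ)) = (n:ℝ) := by exact_mod_cast congrArg (Nat.cast : ℕ → ℝ) hKM
    rw [hKM, hcast] at hid
    simpa only [hDn] using hid
  have hspine : Real.sqrt π ≠ 0 := ne_of_gt (Real.sqrt_pos.mpr Real.pi_pos)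
  have hD : Tendsto Dn atTop (nhds 1) := by
    have h2 : Tendsto (fun n => Real.sqrt π * Stirling.stirlingSeq n
        / (Stirling.stirlingSeq (k n) * Stirling.stirlingSeq (n - k n))) atTop
        (nhds (Real.sqrt π * Real.sqrt π / (Real.sqrt π * Real.sqrt π))) :=
      (tendsto_const_nhds.mul hspi).div ((hspi.comp hktop).mul (hspi.comp hmtop))
        (mul_ne_zero hspine hspine)
    rw [div_self (mul_ne_zero hspine hspine)] at h2
    exact (tendsto_congr' hDid).mpr h2
  -- the main eventual identity
  have hmain : ∀ᶠ n in atTop,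
      (∑ j ∈ Finset.Icc (k n) n, bb n j) / binomQ q n ((k n:ℝ)/n)
      = (∑' i, g n i) * (Dn n * (((k n:ℝ)/n - q)/(((k n:ℝ)/n)*(1-q)))) := by
    filter_upwards [hk1, hklt, eventually_ge_atTop 1] with n h1 h2 h3
    have hn0 : (0:ℝ) < n := by exact_mod_cast h3
    have hK0 : (0:ℝ) < k n := by exact_mod_cast h1
    have hM1 : 1 ≤ n - k n := by omega
    have hM0 : (0:ℝ) < ((n - k n : ℕ):ℝ) := by exact_mod_cast hM1
    have hKM : k n + (n - k n) = n := by omega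
    have hcast : ((k n:ℝ) + ((n - k n:ℕ):ℝ)) = (n:ℝ) := by exact_mod_cast congrArg (Nat.cast : ℕ → ℝ) hKM
    have hα0 : (0:ℝ) < (k n:ℝ)/n := by positivity
    have hαq : q < (k n:ℝ)/n := by
      rw [lt_div_iff₀ hn0]
      have := hknt n
      nlinarith
    have hα1 : (k n:ℝ)/n < 1 := by
      rw [div_lt_one hn0]
      exact_mod_cast h2
    have h1α : 1 - (k n:ℝ)/n = ((n - k n:ℕ):ℝ)/n := by
      field_simp
      linarith [hcast]
    have heK : (n:ℝ) * ((k n:ℝ)/n) = ((k n:ℕ):ℝ) := by field_simp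
    have heM : (n:ℝ) * (1 - (k n:ℝ)/n) = ((n - k n:ℕ):ℝ) := by
      rw [h1α]; field_simp
    have hQeq : binomQ q n ((k n:ℝ)/n)
        = Real.sqrt (((k n:ℝ)/n) / (2 * π * n * (1 - (k n:ℝ)/n))) * ((1 - q) / ((k n:ℝ)/n - q)) *
          (q / ((k n:ℝ)/n)) ^ (k n) * ((1 - q) / (1 - (k n:ℝ)/n)) ^ (n - k n) := by
      rw [binomQ, heK, heM, Real.rpow_natCast, Real.rpow_natCast]
    -- the sqrt relation
    have hnum2 : (0:ℝ) < 2*π*(k n)*((n - k n:ℕ):ℝ) :=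
      mul_pos (mul_pos (mul_pos two_pos Real.pi_pos) hK0) hM0
    have hden2 : (0:ℝ) < 2 * π * (n:ℝ) * (1 - (k n:ℝ)/n) :=
      mul_pos (mul_pos (mul_pos two_pos Real.pi_pos) hn0) (by linarith)
    have hs2pos : 0 < Real.sqrt (2*π*(k n)*((n - k n:ℕ):ℝ)/n) :=
      Real.sqrt_pos.mpr (div_pos hnum2 hn0)
    have hs1 : Real.sqrt (((k n:ℝ)/n) / (2 * π * n * (1 - (k n:ℝ)/n)))
        = ((k n:ℝ)/n) / Real.sqrt (2*π*(k n)*((n - k n:ℕ):ℝ)/n) := by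
      rw [eq_div_iff (ne_of_gt hs2pos), ← Real.sqrt_mul (le_of_lt (div_pos hα0 hden2))]
      rw [show ((k n:ℝ)/n) / (2 * π * n * (1 - (k n:ℝ)/n)) * (2*π*(k n)*((n - k n:ℕ):ℝ)/n)
          = ((k n:ℝ)/n)^2 from ?_]
      · exact Real.sqrt_sq (le_of_lt hα0)
      · rw [h1α]
        field_simp
    rw [hSfun n, hQeq, hs1]
    have hQne : Real.sqrt (2*π*(k n)*((n - k n:ℕ):ℝ)/n) ≠ 0 := ne_of_gt hs2pos
    have hαqne : (k n:ℝ)/n - q ≠ 0 := ne_of_gt (by linarith)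
    have h1αne : 1 - (k n:ℝ)/n ≠ 0 := ne_of_gt (by linarith)
    have hQne2 : ((k n:ℝ)/n) / Real.sqrt (2*π*(k n)*((n - k n:ℕ):ℝ)/n) * ((1 - q) / ((k n:ℝ)/n - q)) *
          (q / ((k n:ℝ)/n)) ^ (k n) * ((1 - q) / (1 - (k n:ℝ)/n)) ^ (n - k n) ≠ 0 := by
      apply mul_ne_zero (mul_ne_zero (mul_ne_zero ?_ ?_) ?_) ?_
      · exact ne_of_gt (div_pos hα0 hs2pos)
      · exact ne_of_gt (div_pos (by linarith) (by linarith))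
      · exact ne_of_gt (pow_pos (div_pos hq0 hα0) _)
      · exact ne_of_gt (pow_pos (div_pos (by linarith) (by linarith)) _)
    rw [mul_comm (bb n (k n)) _, mul_div_assoc]
    congr 1
    rw [div_eq_iff hQne2]
    symm
    have e3 : ((k n:ℝ)/n - q)/(((k n:ℝ)/n)*(1-q)) = ((k n:ℝ)/n - q) * (((k n:ℝ)/n)⁻¹ * (1-q)⁻¹) := by
      rw [div_eq_mul_inv, mul_inv]
    have hMn0 : ((n - k n:ℕ):ℝ)/n ≠ 0 := ne_of_gt (div_pos hM0 hn0)
    have e1 : (q/((k n:ℝ)/n))^(k n) * ((k n:ℝ)/n)^(k n) = q^(k n) := by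
      rw [← mul_pow, div_mul_cancel₀ _ (ne_of_gt hα0)]
    have e2 : ((1-q)/(((n - k n:ℕ):ℝ)/n))^(n - k n) * (((n - k n:ℕ):ℝ)/n)^(n - k n)
        = (1-q)^(n - k n) := by
      rw [← mul_pow, div_mul_cancel₀ _ hMn0]
    calc Dn n * (((k n:ℝ)/n - q)/(((k n:ℝ)/n)*(1-q)))
          * (((k n:ℝ)/n) / Real.sqrt (2*π*(k n)*((n - k n:ℕ):ℝ)/n) * ((1 - q) / ((k n:ℝ)/n - q)) *
            (q / ((k n:ℝ)/n)) ^ (k n) * ((1 - q) / (1 - (k n:ℝ)/n)) ^ (n - k n))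
        = ((n.choose (k n)):ℝ)
            * ((q/((k n:ℝ)/n))^(k n) * ((k n:ℝ)/n)^(k n))
            * (((1-q)/(((n - k n:ℕ):ℝ)/n))^(n - k n) * (((n - k n:ℕ):ℝ)/n)^(n - k n))
            * ((Real.sqrt (2*π*(k n)*((n - k n:ℕ):ℝ)/n))⁻¹ * Real.sqrt (2*π*(k n)*((n - k n:ℕ):ℝ)/n))
            * (((k n:ℝ)/n) * ((k n:ℝ)/n)⁻¹)
            * (((k n:ℝ)/n - q) * ((k n:ℝ)/n - q)⁻¹)
            * ((1-q) * (1-q)⁻¹) := by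
          simp only [hDn]
          rw [h1α, e3]
          ring
      _ = bb n (k n) := by
          rw [e1, e2, inv_mul_cancel₀ hQne, mul_inv_cancel₀ (ne_of_gt hα0),
            mul_inv_cancel₀ hαqne, mul_inv_cancel₀ hq1ne]
          simp only [hbb]
          ring
  -- final limit computation
  have hconst : Tendsto (fun n : ℕ => ((k n:ℝ)/n - q)/(((k n:ℝ)/n)*(1-q))) atTop
      (nhds ((t - q)/(t*(1-q)))) := by
    apply Tendsto.div (hα.sub tendsto_const_nhds) (hα.mul tendsto_const_nhds)
    exact ne_of_gt (by nlinarith)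
  have hTail := htsum.mul (hD.mul hconst)
  rw [one_mul] at hTail
  have hone : (1-ρ)⁻¹ * ((t - q)/(t*(1-q))) = 1 := by
    have h1 : 1 - ρ = (t-q)/((1-q)*t) := by
      rw [hρdef]; field_simp; ring
    rw [h1]
    have h2 : t - q ≠ 0 := ne_of_gt (by linarith)
    field_simp
  rw [hone] at hTail
  exact Tendsto.congr' (by filter_upwards [hmain] with n hn; rw [← hn]) hTail



lemma cond_iff {b z p : ℝ} (hb : 0 < b) (hz : 0 < z) (hp : 1 < p) (n K : ℕ) :
    (z * (n:ℝ)^(1-1/p) * ((K:ℝ) * b^p)^(1/p) ≤ (K:ℝ) * b)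
      ↔ (K = 0 ∨ (n:ℝ) * z^(p/(p-1)) ≤ (K:ℝ)) := by
  have hp0 : (0:ℝ) < p := by linarith
  have hpne : p ≠ 0 := ne_of_gt hp0
  have hp1 : (0:ℝ) < p - 1 := by linarith
  have hc : (0:ℝ) < 1 - 1/p := by
    rw [sub_pos, div_lt_one hp0]; exact hp
  have hbp : (b^p)^(1/p) = b := by
    rw [← Real.rpow_mul hb.le, mul_one_div_cancel hpne, Real.rpow_one]
  rcases Nat.eq_zero_or_pos K with rfl | hK
  · simp only [Nat.cast_zero, zero_mul, true_or, iff_true]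
    rw [Real.zero_rpow (one_div_ne_zero hpne), mul_zero]
  · have hK0 : (0:ℝ) < K := by exact_mod_cast hK
    have hKne : K ≠ 0 := Nat.pos_iff_ne_zero.mp hK
    simp only [hKne, false_or]
    have e1 : ((K:ℝ) * b^p)^(1/p) = (K:ℝ)^(1/p) * b := by
      rw [Real.mul_rpow hK0.le (Real.rpow_nonneg hb.le p), hbp]
    rw [e1]
    have eK : (K:ℝ) * b = ((K:ℝ)^(1-1/p) * (K:ℝ)^(1/p)) * b := by
      rw [← Real.rpow_add hK0, show (1-1/p) + 1/p = 1 by ring, Real.rpow_one]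
    rw [eK, show z * (n:ℝ)^(1-1/p) * ((K:ℝ)^(1/p) * b)
        = (z * (n:ℝ)^(1-1/p)) * ((K:ℝ)^(1/p) * b) from by ring,
      show ((K:ℝ)^(1-1/p) * (K:ℝ)^(1/p)) * b = (K:ℝ)^(1-1/p) * ((K:ℝ)^(1/p) * b) from by ring,
      mul_le_mul_iff_of_pos_right (mul_pos (Real.rpow_pos_of_pos hK0 _) hb)]
    rw [← Real.rpow_le_rpow_iff (by positivity) (Real.rpow_nonneg hK0.le _) 
        (show (0:ℝ) < p/(p-1) by positivity)]
    rw [← Real.rpow_mul hK0.le, show (1-1/p) * (p/(p-1)) = 1 from by field_simp,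
      Real.rpow_one, Real.mul_rpow hz.le (Real.rpow_nonneg (Nat.cast_nonneg n) _),
      ← Real.rpow_mul (Nat.cast_nonneg n), show (1-1/p) * (p/(p-1)) = 1 from by field_simp,
      Real.rpow_one, mul_comm (z^(p/(p-1))) ((n:ℝ))]


lemma prob_formula {Ω : Type*} [MeasurableSpace Ω] (P : Measure Ω) [IsProbabilityMeasure P]
    (X : ℕ → Ω → ℝ) (hmeas : ∀ i, Measurable (X i))
    (hindep : iIndepFun X P)
    (b q : ℝ) (hb : 0 < b) (hq : q ∈ Set.Ioo (0 : ℝ) 1)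
    (hdist : ∀ j, P.map (X j)
      = ENNReal.ofReal q • Measure.dirac b + ENNReal.ofReal (1 - q) • Measure.dirac (0 : ℝ))
    (z p : ℝ) (hp0 : p ≠ 0) (n kk : ℕ) (hkk1 : 1 ≤ kk)
    (hiff : ∀ K : ℕ, K ≤ n →
      ((z * (n:ℝ)^(1-1/p) * ((K:ℝ) * b^p)^(1/p) ≤ (K:ℝ) * b) ↔ (K = 0 ∨ kk ≤ K))) :
    (P {ω | z * (n:ℝ)^(1-1/p) * (∑ j ∈ Finset.range n, |X j ω|^p)^(1/p)
        ≤ ∑ j ∈ Finset.range n, X j ω}).toReal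
    = (1-q)^n + ∑ j ∈ Finset.Icc kk n, ((n.choose j:ℝ) * q^j * (1-q)^(n-j)) := by
  obtain ⟨hq0, hq1⟩ := hq
  -- preimage probabilities
  have hXb : ∀ i, P (X i ⁻¹' {b}) = ENNReal.ofReal q := by
    intro i
    rw [← Measure.map_apply (hmeas i) (measurableSet_singleton b), hdist i]
    simp [Measure.dirac_apply, Set.indicator, hb.ne', hb.ne]
  have hX0 : ∀ i, P (X i ⁻¹' {0}) = ENNReal.ofReal (1-q) := by
    intro i
    rw [← Measure.map_apply (hmeas i) (measurableSet_singleton 0), hdist i]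
    simp [Measure.dirac_apply, Set.indicator, hb.ne', hb.ne]
  have hXout : ∀ i, P (X i ⁻¹' ({0,b} : Set ℝ)ᶜ) = 0 := by
    intro i
    rw [← Measure.map_apply (hmeas i) (by measurability), hdist i]
    simp [Measure.dirac_apply, Set.indicator, hb.ne', hb.ne]
  set cnt : Ω → ℕ := fun ω => ((Finset.range n).filter (fun j => X j ω = b)).card with hcnt
  have hcnt_meas : Measurable cnt := by
    have : cnt = fun ω => ∑ j ∈ Finset.range n, (if X j ω = b then 1 else 0) := by
      funext ω
      rw [hcnt]
      exact Finset.card_filter _ _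
    rw [this]
    apply Finset.measurable_sum
    intro j _
    exact Measurable.ite (measurableSet_eq_fun (hmeas j) measurable_const)
      measurable_const measurable_const
  have hcnt_le : ∀ ω, cnt ω ≤ n := by
    intro ω
    rw [hcnt]
    exact le_trans (Finset.card_filter_le _ _) (by simp)
  -- elementary events
  set E : Finset ℕ → Set Ω := fun s =>
    ⋂ i ∈ Finset.range n, X i ⁻¹' (if i ∈ s then ({b} : Set ℝ) else {0}) with hE
  have hE_meas : ∀ s, MeasurableSet (E s) := by
    intro s
    apply MeasurableSet.biInter (Set.to_countable _)
    intro i _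
    apply (hmeas i)
    split_ifs <;> exact measurableSet_singleton _
  have hE_prob : ∀ s : Finset ℕ, s ⊆ Finset.range n →
      P (E s) = ENNReal.ofReal q ^ s.card * ENNReal.ofReal (1-q) ^ (n - s.card) := by
    intro s hs
    rw [hE]
    rw [hindep.measure_inter_preimage_eq_mul (Finset.range n)
      (sets := fun i => if i ∈ s then ({b} : Set ℝ) else {0})
      (fun i _ => by
        show MeasurableSet (if i ∈ s then ({b} : Set ℝ) else {0})
        split_ifs <;> exact measurableSet_singleton _)]
    have h1 : ∀ i ∈ Finset.range n,
        P (X i ⁻¹' (if i ∈ s then ({b} : Set ℝ) else {0}))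
        = if i ∈ s then ENNReal.ofReal q else ENNReal.ofReal (1-q) := by
      intro i _
      split_ifs with h
      · exact hXb i
      · exact hX0 i
    rw [Finset.prod_congr rfl h1, Finset.prod_ite, Finset.prod_const, Finset.prod_const]
    congr 2
    · rw [Finset.filter_mem_eq_inter, Finset.inter_eq_right.mpr hs]
    · rw [Finset.filter_not, Finset.filter_mem_eq_inter, Finset.inter_eq_right.mpr hs, Finset.card_sdiff_of_subset hs, Finset.card_range]
  have hEmem : ∀ s : Finset ℕ, ∀ ω, ω ∈ E s ↔
      ∀ i ∈ Finset.range n, ω ∈ X i ⁻¹' (if i ∈ s then ({b} : Set ℝ) else {0}) := by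
    intro s ω
    rw [hE]
    exact Set.mem_iInter₂
  have hE_sub : ∀ s : Finset ℕ, s ⊆ Finset.range n → E s ⊆ {ω | cnt ω = s.card} := by
    intro s hs ω hω
    rw [hEmem] at hω
    have hfil : (Finset.range n).filter (fun j => X j ω = b) = s := by
      ext i
      simp only [Finset.mem_filter]
      constructor
      · rintro ⟨hir, hib⟩
        by_contra his
        have h2 := hω i hir
        rw [if_neg his] at h2
        have : X i ω = 0 := h2
        rw [hib] at this
        exact hb.ne' this
      · intro his
        have hir := hs his
        have h2 := hω i hir
        rw [if_pos his] at h2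
        exact ⟨hir, h2⟩
    show cnt ω = s.card
    rw [hcnt]
    simp only [hfil]
  have hE_disj : ∀ j : ℕ,
      Set.PairwiseDisjoint ↑(Finset.powersetCard j (Finset.range n)) E := by
    intro j s1 hs1 s2 hs2 hne
    rw [Finset.mem_coe, Finset.mem_powersetCard] at hs1 hs2
    apply Set.disjoint_left.mpr
    intro ω hω1 hω2
    rw [hEmem] at hω1 hω2
    have hnsub : ¬ s1 ⊆ s2 := fun hsub =>
      hne (Finset.eq_of_subset_of_card_le hsub (le_of_eq (hs2.2.trans hs1.2.symm)))
    obtain ⟨i, hi1, hi2⟩ := Finset.not_subset.mp hnsub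
    have hir : i ∈ Finset.range n := hs1.1 hi1
    have h1 := hω1 i hir
    have h2 := hω2 i hir
    rw [if_pos hi1] at h1
    rw [if_neg hi2] at h2
    have hb' : X i ω = b := h1
    have h0' : X i ω = 0 := h2
    rw [hb'] at h0'
    exact hb.ne' h0'
  set N : Set Ω := ⋃ i ∈ Finset.range n, X i ⁻¹' ({0,b} : Set ℝ)ᶜ with hN
  have hN0 : P N = 0 := by
    rw [hN]
    exact (measure_biUnion_null_iff (Finset.range n).countable_toSet).mpr (fun i _ => hXout i)
  have hNout : ∀ ω, ω ∉ N → ∀ i ∈ Finset.range n, X i ω = 0 ∨ X i ω = b := by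
    intro ω hω i hi
    by_contra hcon
    push_neg at hcon
    apply hω
    rw [hN]
    apply Set.mem_biUnion hi
    simp only [Set.mem_preimage, Set.mem_compl_iff, Set.mem_insert_iff, Set.mem_singleton_iff]
    push_neg
    exact hcon
  -- distribution of the count
  have hPcnt : ∀ j : ℕ, P {ω | cnt ω = j}
      = (n.choose j : ℝ≥0∞) * ENNReal.ofReal q ^ j * ENNReal.ofReal (1-q) ^ (n-j) := by
    intro j
    have hUP : P (⋃ s ∈ Finset.powersetCard j (Finset.range n), E s)
        = (n.choose j : ℝ≥0∞) * ENNReal.ofReal q ^ j * ENNReal.ofReal (1-q) ^ (n-j) := by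
      rw [measure_biUnion_finset (hE_disj j) (fun s _ => hE_meas s)]
      have hterm : ∀ s ∈ Finset.powersetCard j (Finset.range n),
          P (E s) = ENNReal.ofReal q ^ j * ENNReal.ofReal (1-q) ^ (n-j) := by
        intro s hs
        rw [Finset.mem_powersetCard] at hs
        rw [hE_prob s hs.1, hs.2]
      rw [Finset.sum_congr rfl hterm, Finset.sum_const, Finset.card_powersetCard,
        Finset.card_range, nsmul_eq_mul, mul_assoc]
    have hsub1 : (⋃ s ∈ Finset.powersetCard j (Finset.range n), E s) ⊆ {ω | cnt ω = j} := by
      apply Set.iUnion₂_subset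
      intro s hs
      rw [Finset.mem_powersetCard] at hs
      intro ω hω
      have := hE_sub s hs.1 hω
      rw [hs.2] at this
      exact this
    have hsub2 : {ω | cnt ω = j} ⊆ (⋃ s ∈ Finset.powersetCard j (Finset.range n), E s) ∪ N := by
      intro ω hω
      by_cases hωN : ω ∈ N
      · exact Or.inr hωN
      · left
        refine Set.mem_iUnion₂.mpr ⟨(Finset.range n).filter (fun i => X i ω = b), ?_, ?_⟩
        · rw [Finset.mem_powersetCard]
          exact ⟨Finset.filter_subset _ _, hω⟩
        · rw [hEmem]
          intro i hi
          by_cases hifil : i ∈ (Finset.range n).filter (fun i => X i ω = b)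
          · rw [if_pos hifil]
            exact (Finset.mem_filter.mp hifil).2
          · rw [if_neg hifil]
            rcases hNout ω hωN i hi with h0 | hb'
            · exact h0
            · exact absurd (Finset.mem_filter.mpr ⟨hi, hb'⟩) hifil
    apply le_antisymm
    · calc P {ω | cnt ω = j} ≤ P ((⋃ s ∈ Finset.powersetCard j (Finset.range n), E s) ∪ N) :=
            measure_mono hsub2
        _ ≤ P (⋃ s ∈ Finset.powersetCard j (Finset.range n), E s) + P N := measure_union_le _ _
        _ = _ := by rw [hN0, add_zero, hUP]
    · rw [← hUP]
      exact measure_mono hsub1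
  -- rewriting the event via the count
  have hAB : ∀ ω, ω ∉ N →
      ((z * (n:ℝ)^(1-1/p) * (∑ j ∈ Finset.range n, |X j ω|^p)^(1/p)
          ≤ ∑ j ∈ Finset.range n, X j ω)
        ↔ (cnt ω = 0 ∨ kk ≤ cnt ω)) := by
    intro ω hω
    have hval := hNout ω hω
    have h1 : ∑ j ∈ Finset.range n, X j ω = (cnt ω : ℝ) * b := by
      rw [Finset.sum_congr rfl (g := fun j => if X j ω = b then b else 0)
        (fun j hj => by
          show X j ω = if X j ω = b then b else 0
          rcases hval j hj with h0 | hb'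
          · rw [if_neg (by rw [h0]; exact hb.ne), h0]
          · rw [if_pos hb', hb']), ← Finset.sum_filter, Finset.sum_const, nsmul_eq_mul]
    have h2 : ∑ j ∈ Finset.range n, |X j ω|^p = (cnt ω : ℝ) * b^p := by
      rw [Finset.sum_congr rfl (g := fun j => if X j ω = b then b^p else 0)
        (fun j hj => by
          show |X j ω|^p = if X j ω = b then b^p else 0
          rcases hval j hj with h0 | hb'
          · rw [if_neg (by rw [h0]; exact hb.ne), h0, abs_zero, Real.zero_rpow hp0]
          · rw [if_pos hb', hb', abs_of_pos hb]), ← Finset.sum_filter, Finset.sum_const,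
          nsmul_eq_mul]
    rw [h1, h2]
    exact hiff (cnt ω) (hcnt_le ω)
  -- the event probability
  have hcnt_set_meas : ∀ j : ℕ, MeasurableSet {ω | cnt ω = j} :=
    fun j => hcnt_meas (measurableSet_singleton j)
  have hPA : P {ω | z * (n:ℝ)^(1-1/p) * (∑ j ∈ Finset.range n, |X j ω|^p)^(1/p)
        ≤ ∑ j ∈ Finset.range n, X j ω}
      = P {ω | cnt ω = 0 ∨ kk ≤ cnt ω} := by
    apply le_antisymm
    · calc P {ω | z * (n:ℝ)^(1-1/p) * (∑ j ∈ Finset.range n, |X j ω|^p)^(1/p)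
            ≤ ∑ j ∈ Finset.range n, X j ω}
          ≤ P ({ω | cnt ω = 0 ∨ kk ≤ cnt ω} ∪ N) := by
            apply measure_mono
            intro ω hω
            by_cases hωN : ω ∈ N
            · exact Or.inr hωN
            · exact Or.inl ((hAB ω hωN).mp hω)
        _ ≤ P {ω | cnt ω = 0 ∨ kk ≤ cnt ω} + P N := measure_union_le _ _
        _ = P {ω | cnt ω = 0 ∨ kk ≤ cnt ω} := by rw [hN0, add_zero]
    · calc P {ω | cnt ω = 0 ∨ kk ≤ cnt ω}
          ≤ P ({ω | z * (n:ℝ)^(1-1/p) * (∑ j ∈ Finset.range n, |X j ω|^p)^(1/p)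
            ≤ ∑ j ∈ Finset.range n, X j ω} ∪ N) := by
            apply measure_mono
            intro ω hω
            by_cases hωN : ω ∈ N
            · exact Or.inr hωN
            · exact Or.inl ((hAB ω hωN).mpr hω)
        _ ≤ _ + P N := measure_union_le _ _
        _ = _ := by rw [hN0, add_zero]
  have hBU : {ω | cnt ω = 0 ∨ kk ≤ cnt ω}
      = ⋃ j ∈ insert 0 (Finset.Icc kk n), {ω | cnt ω = j} := by
    ext ω
    simp only [Set.mem_setOf_eq, Set.mem_iUnion, Finset.mem_insert, Finset.mem_Icc,
      exists_prop]
    constructor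
    · rintro (h0 | hk)
      · exact ⟨0, Or.inl rfl, h0⟩
      · exact ⟨cnt ω, Or.inr ⟨hk, hcnt_le ω⟩, rfl⟩
    · rintro ⟨j, (rfl | ⟨hj1, _⟩), hj⟩
      · exact Or.inl hj
      · exact Or.inr (by omega)
  have hdisj2 : Set.PairwiseDisjoint ↑(insert 0 (Finset.Icc kk n)) (fun j => {ω | cnt ω = j}) := by
    intro i _ j _ hij
    apply Set.disjoint_left.mpr
    intro ω h1 h2
    exact hij (h1.symm.trans h2)
  have hPB : P {ω | cnt ω = 0 ∨ kk ≤ cnt ω}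
      = P {ω | cnt ω = 0} + ∑ j ∈ Finset.Icc kk n, P {ω | cnt ω = j} := by
    rw [hBU, measure_biUnion_finset hdisj2 (fun j _ => hcnt_set_meas j),
      Finset.sum_insert (by simp; omega)]
  rw [hPA, hPB]
  have htoReal : ∀ j : ℕ, (P {ω | cnt ω = j}).toReal = (n.choose j:ℝ) * q^j * (1-q)^(n-j) := by
    intro j
    rw [hPcnt j, ENNReal.toReal_mul, ENNReal.toReal_mul, ENNReal.toReal_pow, ENNReal.toReal_pow,
      ENNReal.toReal_ofReal hq0.le, ENNReal.toReal_ofReal (by linarith), ENNReal.toReal_natCast]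
  rw [ENNReal.toReal_add (measure_ne_top P _) (by
      exact (ENNReal.sum_lt_top.mpr (fun j _ => (measure_lt_top P _))).ne),
    ENNReal.toReal_sum (fun j _ => measure_ne_top P _)]
  congr 1
  · rw [htoReal 0]
    simp
  · exact Finset.sum_congr rfl (fun j _ => htoReal j)


/-- **Theorem 3(ii): exact asymptotics, two-point case with `a = 0`.**
With `t₊ = z^{p/(p−1)}` and `αₙ = ⌈n t₊⌉/n`, one has
`P(Aₙ(z)) = (1−q)ⁿ + (1 + o(1)) · Qₙ(αₙ)` as `n → ∞`. -/
theorem exact_asymptotics_two_point_a_zero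
    {Ω : Type*} [MeasurableSpace Ω] (P : Measure Ω) [IsProbabilityMeasure P]
    (X : ℕ → Ω → ℝ) (hmeas : ∀ i, Measurable (X i))
    (hindep : iIndepFun X P)
    (b q : ℝ) (hb : 0 < b) (hq : q ∈ Set.Ioo (0 : ℝ) 1)
    (hdist : ∀ j, P.map (X j)
      = ENNReal.ofReal q • Measure.dirac b + ENNReal.ofReal (1 - q) • Measure.dirac (0 : ℝ))
    (p : ℝ) (hp : 1 < p)
    (z : ℝ) (hz1 : crossFn p 0 b q < z) (hz2 : z < 1) :
    Tendsto
      (fun n : ℕ =>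
        ((P {ω | z * (n : ℝ) ^ (1 - 1 / p) * (∑ j ∈ Finset.range n, |X j ω| ^ p) ^ (1 / p)
              ≤ ∑ j ∈ Finset.range n, X j ω}).toReal - (1 - q) ^ n)
          / binomQ q n ((⌈(n : ℝ) * z ^ (p / (p - 1))⌉ : ℝ) / n))
      atTop (nhds 1) := by
  obtain ⟨hq0, hq1⟩ := hq
  have hp0 : (0:ℝ) < p := by linarith
  have hpne : p ≠ 0 := ne_of_gt hp0
  have hp1 : (0:ℝ) < p - 1 := by linarith
  have hbppos : (0:ℝ) < b^p := Real.rpow_pos_of_pos hb p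
  have hbp : (b^p)^(1/p) = b := by
    rw [← Real.rpow_mul hb.le, mul_one_div_cancel hpne, Real.rpow_one]
  have hcross : crossFn p 0 b q = q^(1-1/p) := by
    rw [crossFn]
    simp only [abs_zero]
    rw [Real.zero_rpow hpne]
    simp only [zero_add, sub_zero]
    rw [Real.mul_rpow hq0.le hbppos.le, hbp,
      mul_div_mul_right _ _ (ne_of_gt hb), eq_comm, Real.rpow_sub hq0, Real.rpow_one]
  have hz1' : q^(1-1/p) < z := by rwa [hcross] at hz1
  have hz0 : 0 < z := (Real.rpow_pos_of_pos hq0 _).trans hz1'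
  set t := z^(p/(p-1)) with htdef
  have hppos : (0:ℝ) < p/(p-1) := div_pos hp0 hp1
  have htq : q < t := by
    have h2 := Real.rpow_lt_rpow (Real.rpow_nonneg hq0.le _) hz1' hppos
    rwa [← Real.rpow_mul hq0.le, show (1-1/p)*(p/(p-1)) = 1 from by field_simp,
      Real.rpow_one] at h2
  have ht1 : t < 1 := Real.rpow_lt_one hz0.le hz2 hppos
  have hmain := binom_tail_asymp hq0 htq ht1
  refine Tendsto.congr' ?_ hmain
  filter_upwards [eventually_ge_atTop 1] with n hn
  have hn0 : (0:ℝ) < n := by exact_mod_cast hn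
  have hnt0 : (0:ℝ) < (n:ℝ)*t := mul_pos hn0 (hq0.trans htq)
  have hceil : ((⌈(n:ℝ)*t⌉ : ℤ):ℝ) = ((⌈(n:ℝ)*t⌉₊ : ℕ):ℝ) :=
    (natCast_ceil_eq_intCast_ceil hnt0.le).symm
  have hk1 : 1 ≤ ⌈(n:ℝ)*t⌉₊ := Nat.ceil_pos.mpr hnt0
  have hiff : ∀ K : ℕ, K ≤ n →
      ((z * (n:ℝ)^(1-1/p) * ((K:ℝ) * b^p)^(1/p) ≤ (K:ℝ) * b)
        ↔ (K = 0 ∨ ⌈(n:ℝ)*t⌉₊ ≤ K)) := by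
    intro K _
    rw [cond_iff hb hz0 hp n K]
    exact or_congr Iff.rfl Nat.ceil_le.symm
  have hform := prob_formula P X hmeas hindep b q hb ⟨hq0, hq1⟩ hdist z p hpne n
    (⌈(n:ℝ)*t⌉₊) hk1 hiff
  rw [hform, add_sub_cancel_left, hceil]
end

section
/- (Case z > 1 in the general self-normalized setting) Let u : ℝ → [0,∞) be convex with u(0) = 0 and such that x ↦ u(x) and x ↦ u(−x) are strictly increasing on [0,∞). Then for every z > 1 and every n ≥ 1 the event {W_n ≥ z} equals {X₁ = ⋯ = X_n = 0}; consequently P(W_n ≥ z) = P(X = 0)^n, n^{−1}·ln P(W_n ≥ z) = ln P(X = 0) ∈ [−∞, 0] for each n, and lim_{n→∞} n^{−1}·ln P(W_n ≥ z) = ln P(X = 0). -/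
open MeasureTheory ProbabilityTheory Real Set Filter
open scoped ENNReal

/-- **Case `z > 1` in the general self-normalized setting.** Let `u : ℝ → [0,∞)` be convex
with `u(0) = 0`, strictly increasing on `[0,∞)` and strictly decreasing on `(−∞,0]`, with
inverse `v = u₊⁻¹` of its restriction to `[0,∞)`. For every `z > 1` and `n ≥ 1` the event
`{Wₙ ≥ z}` equals `{X₁ = ⋯ = Xₙ = 0}`; consequently `P(Wₙ ≥ z) = P(X = 0)ⁿ`,
`n⁻¹·ln P(Wₙ ≥ z) = ln P(X = 0)` for each `n ≥ 1`, and
`lim_{n→∞} n⁻¹·ln P(Wₙ ≥ z) = ln P(X = 0)`. -/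
theorem general_self_normalized_z_gt_one
    {Ω : Type*} [MeasurableSpace Ω] (P : Measure Ω) [IsProbabilityMeasure P]
    (X : ℕ → Ω → ℝ) (hmeas : ∀ i, Measurable (X i))
    (hindep : iIndepFun X P)
    (hident : ∀ i, IdentDistrib (X i) (X 0) P P)
    (u : ℝ → ℝ) (hconv : ConvexOn ℝ Set.univ u) (hu0 : u 0 = 0)
    (hnn : ∀ x, 0 ≤ u x)
    (hmono : StrictMonoOn u (Set.Ici 0)) (hanti : StrictAntiOn u (Set.Iic 0))
    (v : ℝ → ℝ)
    (hvleft : ∀ x ∈ Set.Ici (0 : ℝ), v (u x) = x)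
    (hvright : ∀ y ∈ Set.Ici (0 : ℝ), 0 ≤ v y ∧ u (v y) = y)
    (z : ℝ) (hz : 1 < z) :
    (∀ n : ℕ, 1 ≤ n →
        ({ω | (∑ j ∈ Finset.range n, u (X j ω)) = 0}
            ∪ {ω | 0 < (∑ j ∈ Finset.range n, u (X j ω)) ∧
                z * ((n : ℝ) * v ((∑ j ∈ Finset.range n, u (X j ω)) / n))
                  ≤ ∑ j ∈ Finset.range n, X j ω})
          = {ω | ∀ j < n, X j ω = 0})
      ∧ (∀ n : ℕ, 1 ≤ n →
          P ({ω | (∑ j ∈ Finset.range n, u (X j ω)) = 0}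
              ∪ {ω | 0 < (∑ j ∈ Finset.range n, u (X j ω)) ∧
                  z * ((n : ℝ) * v ((∑ j ∈ Finset.range n, u (X j ω)) / n))
                    ≤ ∑ j ∈ Finset.range n, X j ω})
            = P {ω | X 0 ω = 0} ^ n)
      ∧ (∀ n : ℕ, 1 ≤ n →
          (((n : ℝ)⁻¹ : ℝ) : EReal) *
              ENNReal.log
                (P ({ω | (∑ j ∈ Finset.range n, u (X j ω)) = 0}
                    ∪ {ω | 0 < (∑ j ∈ Finset.range n, u (X j ω)) ∧
                        z * ((n : ℝ) * v ((∑ j ∈ Finset.range n, u (X j ω)) / n))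
                          ≤ ∑ j ∈ Finset.range n, X j ω}))
            = ENNReal.log (P {ω | X 0 ω = 0}))
      ∧ Tendsto
          (fun n : ℕ =>
            (((n : ℝ)⁻¹ : ℝ) : EReal) *
              ENNReal.log
                (P ({ω | (∑ j ∈ Finset.range n, u (X j ω)) = 0}
                    ∪ {ω | 0 < (∑ j ∈ Finset.range n, u (X j ω)) ∧
                        z * ((n : ℝ) * v ((∑ j ∈ Finset.range n, u (X j ω)) / n))
                          ≤ ∑ j ∈ Finset.range n, X j ω})))
          atTop (nhds (ENNReal.log (P {ω | X 0 ω = 0}))) := by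
  -- u vanishes only at 0
  have hu_zero : ∀ x : ℝ, u x = 0 → x = 0 := by
    intro x hx
    by_contra hne
    rcases lt_or_gt_of_ne hne with h | h
    · have : u 0 < u x := hanti h.le (Set.mem_Iic.2 (le_refl 0)) h
      rw [hu0, hx] at this; exact lt_irrefl 0 this
    · have : u 0 < u x := hmono (Set.mem_Ici.2 (le_refl 0)) h.le h
      rw [hu0, hx] at this; exact lt_irrefl 0 this
  -- Part 1 : event equality
  have part1 : ∀ n : ℕ, 1 ≤ n →
      ({ω | (∑ j ∈ Finset.range n, u (X j ω)) = 0}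
          ∪ {ω | 0 < (∑ j ∈ Finset.range n, u (X j ω)) ∧
              z * ((n : ℝ) * v ((∑ j ∈ Finset.range n, u (X j ω)) / n))
                ≤ ∑ j ∈ Finset.range n, X j ω})
        = {ω | ∀ j < n, X j ω = 0} := by
    intro n hn
    have hnpos : (0 : ℝ) < n := by exact_mod_cast hn
    ext ω
    constructor
    · rintro (hU | ⟨hU, hS⟩)
      · -- sum of u's is zero, each term nonneg, so each X j ω = 0
        intro j hj
        have := (Finset.sum_eq_zero_iff_of_nonneg
          (fun i _ => hnn (X i ω))).1 hU j (Finset.mem_range.2 hj)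
        exact hu_zero _ this
      · -- impossible branch
        exfalso
        set S := ∑ j ∈ Finset.range n, X j ω with hSdef
        set U := ∑ j ∈ Finset.range n, u (X j ω) with hUdef
        have hy : 0 < U / n := div_pos hU hnpos
        obtain ⟨hv0, hvu⟩ := hvright (U / n) hy.le
        have hvpos : 0 < v (U / n) := by
          rcases hv0.lt_or_eq with h | h
          · exact h
          · exfalso; rw [← h, hu0] at hvu; exact hy.ne hvu
        have hnv : 0 < (n : ℝ) * v (U / n) := mul_pos hnpos hvpos
        have hSpos : (n : ℝ) * v (U / n) < S :=
          lt_of_lt_of_le (by nlinarith) hS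
        -- Jensen
        have hw : ∀ j ∈ Finset.range n, (0 : ℝ) ≤ (n : ℝ)⁻¹ :=
          fun _ _ => inv_nonneg.2 hnpos.le
        have hsum : ∑ _j ∈ Finset.range n, (n : ℝ)⁻¹ = 1 := by
          rw [Finset.sum_const, Finset.card_range, nsmul_eq_mul,
            mul_inv_cancel₀ hnpos.ne']
        have hJ := hconv.map_sum_le hw hsum (fun j _ => Set.mem_univ (X j ω))
        simp only [smul_eq_mul] at hJ
        rw [← Finset.mul_sum, ← Finset.mul_sum] at hJ
        have hJ' : u (S / n) ≤ U / n := by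
          rw [div_eq_inv_mul, div_eq_inv_mul]; exact hJ
        have hSn : v (U / n) < S / n := by
          rw [lt_div_iff₀ hnpos, mul_comm]; exact hSpos
        have : u (v (U / n)) < u (S / n) :=
          hmono hv0 (hv0.trans hSn.le) hSn
        rw [hvu] at this
        exact absurd hJ' (not_le.2 this)
    · intro h
      left
      have : ∀ j ∈ Finset.range n, u (X j ω) = 0 := by
        intro j hj
        rw [h j (Finset.mem_range.1 hj), hu0]
      exact Finset.sum_eq_zero this
  -- Part 2 : probability
  have part2 : ∀ n : ℕ, 1 ≤ n →
      P ({ω | (∑ j ∈ Finset.range n, u (X j ω)) = 0}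
          ∪ {ω | 0 < (∑ j ∈ Finset.range n, u (X j ω)) ∧
              z * ((n : ℝ) * v ((∑ j ∈ Finset.range n, u (X j ω)) / n))
                ≤ ∑ j ∈ Finset.range n, X j ω})
        = P {ω | X 0 ω = 0} ^ n := by
    intro n hn
    rw [part1 n hn]
    have hset : {ω : Ω | ∀ j < n, X j ω = 0}
        = ⋂ j ∈ Finset.range n, X j ⁻¹' {0} := by
      ext ω; simp [Finset.mem_range]
    rw [hset,
      hindep.meas_biInter (fun i _ => ⟨{0}, measurableSet_singleton 0, rfl⟩)]
    have heach : ∀ j, P (X j ⁻¹' {0}) = P {ω | X 0 ω = 0} := by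
      intro j
      have := (hident j).measure_mem_eq (measurableSet_singleton (0 : ℝ))
      simpa [Set.preimage, Set.mem_singleton_iff] using this
    calc ∏ j ∈ Finset.range n, P (X j ⁻¹' {0})
        = ∏ _j ∈ Finset.range n, P {ω | X 0 ω = 0} :=
          Finset.prod_congr rfl (fun j _ => heach j)
      _ = P {ω | X 0 ω = 0} ^ n := by
          rw [Finset.prod_const, Finset.card_range]
  -- Part 3 : logarithm identity
  have part3 : ∀ n : ℕ, 1 ≤ n →
      (((n : ℝ)⁻¹ : ℝ) : EReal) *
          ENNReal.log
            (P ({ω | (∑ j ∈ Finset.range n, u (X j ω)) = 0}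
                ∪ {ω | 0 < (∑ j ∈ Finset.range n, u (X j ω)) ∧
                    z * ((n : ℝ) * v ((∑ j ∈ Finset.range n, u (X j ω)) / n))
                      ≤ ∑ j ∈ Finset.range n, X j ω}))
        = ENNReal.log (P {ω | X 0 ω = 0}) := by
    intro n hn
    have hnpos : (0 : ℝ) < n := by exact_mod_cast hn
    rw [part2 n hn, ENNReal.log_pow, ← EReal.coe_coe_eq_natCast, ← mul_assoc,
      ← EReal.coe_mul, inv_mul_cancel₀ hnpos.ne', EReal.coe_one, one_mul]
  refine ⟨part1, part2, part3, ?_⟩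
  apply Tendsto.congr' _ tendsto_const_nhds
  filter_upwards [eventually_ge_atTop 1] with n hn
  exact (part3 n hn).symm
end
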